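/- Let l ≤ l' be positive integers, δ = (l'-l+1)/2, and let μ' = (μ'_1, …, μ'_{l'}) be a strictly decreasing sequence with μ'_j = δ - j for 1 ≤ j ≤ l'-l and -μ'_k ∈ δ + ℤ_{≥0} for l'-l+1 ≤ k ≤ l'. Then the Weyl dimension formula product ∏_{1 ≤ j < k ≤ l'} (μ'_j - μ'_k)/(k - j) equals (1/∏_{j=1}^{l} (l'-j)!) · ∏_{j=l'-l+1}^{l'} ((δ - μ'_j - 1)!/(-μ'_j - δ)!) · ∏_{l'-l+1 ≤ j < k ≤ l'} (μ'_j - μ'_k). -/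

import Mathlib

open Finset

lemma aux1 (n : ℕ) : ∀ m : ℕ, ((m + n).factorial : ℝ)
    = n.factorial * ∏ j ∈ range m, ((m : ℝ) - j + n) := by
  intro m
  induction m with
  | zero => simp
  | succ m ih =>
    have hrw : ∀ j ∈ range (m+1), ((m+1 : ℕ) : ℝ) - (j:ℕ) + n = ((m:ℝ) + 1 - j + n) := by
      intro j _; push_cast; ring
    rw [Finset.prod_congr rfl hrw, Finset.prod_range_succ' (fun j => ((m : ℝ) + 1 - j + n))]
    have hrw2 : ∀ j ∈ range m, ((m:ℝ) + 1 - ((j:ℕ)+1 : ℕ) + n) = ((m:ℝ) - j + n) := by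
      intro j _; push_cast; ring
    rw [Finset.prod_congr rfl hrw2]
    have hfac : ((m + 1 + n).factorial : ℝ) = ((m+n).factorial : ℝ) * ((m:ℝ)+1+n) := by
      have h : m + 1 + n = (m + n) + 1 := by ring
      rw [h, Nat.factorial_succ]; push_cast; ring
    rw [hfac, ih]; push_cast; ring

lemma aux2 (k : ℕ) : (∏ j ∈ range k, ((k : ℝ) - j)) = k.factorial := by
  have h := aux1 0 k
  simp only [Nat.add_zero, Nat.factorial_zero, Nat.cast_one, one_mul, Nat.cast_zero,
    add_zero] at h
  rw [h]

lemma auxlt (l' m : ℕ) (h : m ≤ l') (f : Fin l' → ℝ) (g : ℕ → ℝ)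
    (hfg : ∀ j : Fin l', (j : ℕ) < m → f j = g j) :
    ∏ j ∈ univ.filter (fun j : Fin l' => ¬ (m ≤ (j : ℕ))), f j = ∏ i ∈ range m, g i := by
  symm
  refine Finset.prod_bij (fun a ha => (⟨a, lt_of_lt_of_le (mem_range.mp ha) h⟩ : Fin l'))
    ?_ ?_ ?_ ?_
  · intro a ha; simp [not_le]; exact mem_range.mp ha
  · intro a ha b hb hab; simpa [Fin.ext_iff] using hab
  · intro b hb; simp only [mem_filter, mem_univ, true_and, not_le] at hb
    exact ⟨b, mem_range.mpr hb, by simp⟩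
  · intro a ha
    exact (hfg ⟨a, lt_of_lt_of_le (mem_range.mp ha) h⟩ (mem_range.mp ha)).symm

lemma auxIio {l' : ℕ} (k : Fin l') (f : Fin l' → ℝ) (g : ℕ → ℝ)
    (hfg : ∀ j : Fin l', (j : ℕ) < (k:ℕ) → f j = g j) :
    ∏ j ∈ Iio k, f j = ∏ i ∈ range (k : ℕ), g i := by
  symm
  refine Finset.prod_bij (fun a ha => (⟨a, lt_trans (mem_range.mp ha) k.isLt⟩ : Fin l'))
    ?_ ?_ ?_ ?_
  · intro a ha; simp [Fin.lt_def]; exact mem_range.mp ha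
  · intro a ha b hb hab; simpa [Fin.ext_iff] using hab
  · intro b hb; simp only [mem_Iio, Fin.lt_def] at hb
    exact ⟨b, mem_range.mpr hb, by simp⟩
  · intro a ha
    exact (hfg ⟨a, lt_trans (mem_range.mp ha) k.isLt⟩ (mem_range.mp ha)).symm

lemma auxIcc (l l' : ℕ) (hl : 1 ≤ l) (hll' : l ≤ l') (g : ℕ → ℝ) :
    ∏ j ∈ Finset.Icc 1 l, g (l' - j)
      = ∏ k ∈ univ.filter (fun k : Fin l' => l' - l ≤ (k : ℕ)), g (k : ℕ) := by
  refine Finset.prod_bij (fun a ha => (⟨l' - a, ?_⟩ : Fin l')) ?_ ?_ ?_ ?_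
  · have := (mem_Icc.mp ha).1
    omega
  · intro a ha; simp only [mem_filter, mem_univ, true_and]
    have := mem_Icc.mp ha; omega
  · intro a ha b hb hab
    have ha' := mem_Icc.mp ha; have hb' := mem_Icc.mp hb
    simp only [Fin.ext_iff] at hab; omega
  · intro b hb; simp only [mem_filter, mem_univ, true_and] at hb
    refine ⟨l' - (b:ℕ), mem_Icc.mpr ⟨?_, ?_⟩, ?_⟩
    · have := b.isLt; omega
    · omega
    · have := b.isLt; simp only [Fin.ext_iff]; omega
  · intro a ha; rfl

/-- The dimension formula for the genuine representation `Π'` of `U_{l'}` with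
Harish-Chandra parameter `μ'`.  Here `δ = (l'-l+1)/2`, the first `l'-l`
coordinates of `μ'` are the string `δ-1, δ-2, …` (the `ρ`-shift of `U_{l'-l}`)
and the last `l` coordinates satisfy `-μ'_j = δ + ν_j` with `ν_j ∈ ℤ_{≥0}`;
correspondingly `(δ - μ'_j - 1)! = (l'-l+ν_j)!` and `(-μ'_j - δ)! = ν_j!`. -/
theorem stmt_18 (l l' : ℕ) (hl : 1 ≤ l) (hll' : l ≤ l')
    (δ : ℝ) (hδ : δ = ((l' : ℝ) - l + 1) / 2)
    (μ' : Fin l' → ℝ) (hdec : ∀ j k : Fin l', j < k → μ' k < μ' j)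
    (ν : Fin l' → ℕ)
    (h1 : ∀ j : Fin l', (j : ℕ) < l' - l → μ' j = δ - ((j : ℕ) + 1))
    (h2 : ∀ j : Fin l', l' - l ≤ (j : ℕ) → μ' j = -δ - (ν j : ℝ)) :
    (∏ j : Fin l', ∏ k ∈ Finset.Ioi j, (μ' j - μ' k) / (((k : ℕ) : ℝ) - ((j : ℕ) : ℝ))) =
      (∏ j ∈ Finset.Icc 1 l, (Nat.factorial (l' - j) : ℝ))⁻¹ *
        (∏ j ∈ Finset.univ.filter fun j : Fin l' => l' - l ≤ (j : ℕ),
          (Nat.factorial (l' - l + ν j) : ℝ) / (Nat.factorial (ν j) : ℝ)) *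
        ∏ j ∈ Finset.univ.filter fun j : Fin l' => l' - l ≤ (j : ℕ),
          ∏ k ∈ Finset.Ioi j, (μ' j - μ' k) := by
  have hl'pos : 0 < l' := lt_of_lt_of_le hl hll'
  set m : ℕ := l' - l with hm
  have hmlt : m < l' := by omega
  have hmle : m ≤ l' := le_of_lt hmlt
  have hcast : ((m : ℕ) : ℝ) = (l' : ℝ) - l := by
    rw [hm, Nat.cast_sub hll']
  -- difference formulas
  have hd2 : ∀ j k : Fin l', (j : ℕ) < m → m ≤ (k : ℕ) →
      μ' j - μ' k = ((m : ℕ) : ℝ) - ((j : ℕ) : ℝ) + (ν k : ℝ) := by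
    intro j k hj hk
    rw [h1 j hj, h2 k hk, hδ, hcast]; ring
  have hne : ∀ j k : Fin l', j < k → ((k : ℕ) : ℝ) - ((j : ℕ) : ℝ) ≠ 0 := by
    intro j k hjk
    have h : ((j : ℕ) : ℝ) < ((k : ℕ) : ℝ) := by exact_mod_cast (Fin.lt_def.mp hjk)
    exact sub_ne_zero.mpr (ne_of_gt h)
  set PF : Finset (Fin l') := univ.filter (fun j : Fin l' => m ≤ (j : ℕ)) with hPF
  set NF : Finset (Fin l') := univ.filter (fun j : Fin l' => ¬ m ≤ (j : ℕ)) with hNF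
  -- step 1 : split LHS
  rw [← Finset.prod_filter_mul_prod_filter_not univ (fun j : Fin l' => m ≤ (j : ℕ))]
  -- step 2 : low block
  have stepA : ∀ j ∈ NF,
      (∏ k ∈ Finset.Ioi j, (μ' j - μ' k) / (((k : ℕ) : ℝ) - ((j : ℕ) : ℝ)))
        = ∏ k ∈ PF, (((m : ℕ) : ℝ) - ((j : ℕ) : ℝ) + (ν k : ℝ)) / (((k : ℕ) : ℝ) - ((j : ℕ) : ℝ)) := by
    intro j hj
    have hjm : (j : ℕ) < m := by
      simpa [hNF, not_le] using hj
    rw [← Finset.prod_filter_mul_prod_filter_not (Finset.Ioi j) (fun k : Fin l' => m ≤ (k : ℕ))]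
    have e1 : (Finset.Ioi j).filter (fun k : Fin l' => m ≤ (k : ℕ)) = PF := by
      ext k
      simp only [mem_filter, mem_Ioi, hPF, mem_univ, true_and]
      constructor
      · rintro ⟨_, h⟩; exact h
      · intro h; exact ⟨Fin.lt_def.mpr (lt_of_lt_of_le hjm h), h⟩
    have e2 : ∏ k ∈ (Finset.Ioi j).filter (fun k : Fin l' => ¬ m ≤ (k : ℕ)),
        (μ' j - μ' k) / (((k : ℕ) : ℝ) - ((j : ℕ) : ℝ)) = 1 := by
      apply Finset.prod_eq_one
      intro k hk
      simp only [mem_filter, mem_Ioi, not_le] at hk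
      have hval : μ' j - μ' k = ((k : ℕ) : ℝ) - ((j : ℕ) : ℝ) := by
        rw [h1 j hjm, h1 k hk.2]; ring
      rw [hval, div_self (hne j k hk.1)]
    rw [e1, e2, mul_one]
    refine Finset.prod_congr rfl ?_
    intro k hk
    have hkm : m ≤ (k : ℕ) := by simpa [hPF] using hk
    rw [hd2 j k hjm hkm]
  rw [Finset.prod_congr rfl stepA]
  -- swap to per-k and reindex the inner ¬P product to range m
  rw [Finset.prod_comm]
  have stepA2 : ∀ k ∈ PF,
      (∏ j ∈ NF, (((m : ℕ) : ℝ) - ((j : ℕ) : ℝ) + (ν k : ℝ)) / (((k : ℕ) : ℝ) - ((j : ℕ) : ℝ)))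
        = ((Nat.factorial (m + ν k) : ℝ) / (Nat.factorial (ν k) : ℝ))
            * (∏ i ∈ range m, (((k : ℕ) : ℝ) - (i : ℝ)))⁻¹ := by
    intro k hk
    rw [hNF, auxlt l' m hmle _
      (fun i => (((m : ℕ) : ℝ) - (i : ℝ) + (ν k : ℝ)) / (((k : ℕ) : ℝ) - (i : ℝ)))
      (fun j _ => rfl)]
    rw [Finset.prod_div_distrib]
    have hnum : (∏ i ∈ range m, (((m : ℕ) : ℝ) - (i : ℝ) + (ν k : ℝ)))
        = (Nat.factorial (m + ν k) : ℝ) / (Nat.factorial (ν k) : ℝ) := by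
      have := aux1 (ν k) m
      rw [this]
      field_simp
    rw [hnum, div_eq_mul_inv]
  rw [Finset.prod_congr rfl stepA2]
  -- high block : split numerator and denominator
  have stepB : ∀ j ∈ PF,
      (∏ k ∈ Finset.Ioi j, (μ' j - μ' k) / (((k : ℕ) : ℝ) - ((j : ℕ) : ℝ)))
        = (∏ k ∈ Finset.Ioi j, (μ' j - μ' k))
          / (∏ k ∈ Finset.Ioi j, (((k : ℕ) : ℝ) - ((j : ℕ) : ℝ))) :=
    fun j _ => Finset.prod_div_distrib _ _
  rw [Finset.prod_congr rfl stepB, Finset.prod_div_distrib]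
  -- swap the denominator double product
  have hswap : (∏ j ∈ PF, ∏ k ∈ Finset.Ioi j, (((k : ℕ) : ℝ) - ((j : ℕ) : ℝ)))
      = ∏ k ∈ PF, ∏ j ∈ (Finset.Iio k).filter (fun j : Fin l' => m ≤ (j : ℕ)),
          (((k : ℕ) : ℝ) - ((j : ℕ) : ℝ)) := by
    refine Finset.prod_comm' ?_
    intro x y
    simp only [hPF, mem_filter, mem_univ, true_and, mem_Ioi, mem_Iio]
    constructor
    · rintro ⟨hx, hxy⟩
      exact ⟨⟨hxy, hx⟩, le_trans hx (le_of_lt (Fin.lt_def.mp hxy))⟩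
    · rintro ⟨⟨hxy, hx⟩, _⟩
      exact ⟨hx, hxy⟩
  rw [hswap]
  -- per-k denominator identity
  have hden : ∀ k ∈ PF,
      (∏ i ∈ range m, (((k : ℕ) : ℝ) - (i : ℝ)))
        * (∏ j ∈ (Finset.Iio k).filter (fun j : Fin l' => m ≤ (j : ℕ)),
            (((k : ℕ) : ℝ) - ((j : ℕ) : ℝ)))
        = (Nat.factorial (k : ℕ) : ℝ) := by
    intro k hk
    have hkm : m ≤ (k : ℕ) := by simpa [hPF] using hk
    have e3 : (Finset.Iio k).filter (fun j : Fin l' => ¬ m ≤ (j : ℕ))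
        = univ.filter (fun j : Fin l' => ¬ m ≤ (j : ℕ)) := by
      ext j
      simp only [mem_filter, mem_Iio, mem_univ, true_and, not_le]
      constructor
      · rintro ⟨_, h⟩; exact h
      · intro h; exact ⟨Fin.lt_def.mpr (lt_of_lt_of_le h hkm), h⟩
    have e4 : (∏ j ∈ Finset.Iio k, (((k : ℕ) : ℝ) - ((j : ℕ) : ℝ)))
        = (Nat.factorial (k : ℕ) : ℝ) := by
      rw [auxIio k _ (fun i => (((k : ℕ) : ℝ) - (i : ℝ))) (fun j _ => rfl)]
      exact aux2 (k : ℕ)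
    rw [← e4, ← Finset.prod_filter_mul_prod_filter_not (Finset.Iio k)
      (fun j : Fin l' => m ≤ (j : ℕ)), e3, mul_comm]
    congr 1
    rw [auxlt l' m hmle _ (fun i => (((k : ℕ) : ℝ) - (i : ℝ))) (fun j _ => rfl)]
  -- nonvanishing facts
  have hpos1 : ∀ k ∈ PF, (0:ℝ) < ∏ i ∈ range m, (((k : ℕ) : ℝ) - (i : ℝ)) := by
    intro k hk
    have hkm : m ≤ (k : ℕ) := by simpa [hPF] using hk
    apply Finset.prod_pos
    intro i hi
    have : (i : ℝ) < ((k:ℕ) : ℝ) := by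
      exact_mod_cast lt_of_lt_of_le (mem_range.mp hi) hkm
    linarith
  have hpos2 : ∀ k ∈ PF, (0:ℝ) < ∏ j ∈ (Finset.Iio k).filter (fun j : Fin l' => m ≤ (j : ℕ)),
      (((k : ℕ) : ℝ) - ((j : ℕ) : ℝ)) := by
    intro k hk
    apply Finset.prod_pos
    intro j hj
    have hjk : j < k := (mem_filter.mp hj).1 |> mem_Iio.mp
    have : ((j:ℕ) : ℝ) < ((k:ℕ) : ℝ) := by exact_mod_cast Fin.lt_def.mp hjk
    linarith
  -- now pure algebra over products indexed by PF
  rw [auxIcc l l' hl hll' (fun n => (Nat.factorial n : ℝ))]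
  rw [← hPF]
  rw [Finset.prod_mul_distrib]
  rw [← Finset.prod_inv_distrib]
  have hfin : ∀ k ∈ PF,
      ((Nat.factorial (m + ν k) : ℝ) / (Nat.factorial (ν k) : ℝ)
          * (∏ i ∈ range m, (((k : ℕ) : ℝ) - (i : ℝ)))⁻¹)
        = ((Nat.factorial (m + ν k) : ℝ) / (Nat.factorial (ν k) : ℝ))
          * ((Nat.factorial (k : ℕ) : ℝ))⁻¹
          * (∏ j ∈ (Finset.Iio k).filter (fun j : Fin l' => m ≤ (j : ℕ)),
              (((k : ℕ) : ℝ) - ((j : ℕ) : ℝ))) := by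
    intro k hk
    have h1' := hden k hk
    have h2' := (hpos1 k hk).ne'
    have h3' := (hpos2 k hk).ne'
    rw [← h1']
    field_simp
  have hcomb : (∏ x ∈ PF, (Nat.factorial (m + ν x) : ℝ) / (Nat.factorial (ν x) : ℝ))
        * ∏ x ∈ PF, (∏ i ∈ range m, (((x : ℕ) : ℝ) - (i : ℝ)))⁻¹
      = ((∏ x ∈ PF, (Nat.factorial (m + ν x) : ℝ) / (Nat.factorial (ν x) : ℝ))
          * ∏ x ∈ PF, ((Nat.factorial (x : ℕ) : ℝ))⁻¹)
        * ∏ k ∈ PF, ∏ j ∈ (Finset.Iio k).filter (fun j : Fin l' => m ≤ (j : ℕ)),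
            (((k : ℕ) : ℝ) - ((j : ℕ) : ℝ)) := by
    rw [← Finset.prod_mul_distrib, Finset.prod_congr rfl hfin,
      Finset.prod_mul_distrib, Finset.prod_mul_distrib]
  rw [hcomb]
  have hDne : (∏ k ∈ PF, ∏ j ∈ (Finset.Iio k).filter (fun j : Fin l' => m ≤ (j : ℕ)),
      (((k : ℕ) : ℝ) - ((j : ℕ) : ℝ))) ≠ 0 := (Finset.prod_pos hpos2).ne'
  field_simp
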